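/- For every l ∈ ℕ, the map P ↦ d₁(P) from ℂ[X₀,X₁]_l ∖ {0} to ℕ is lower semicontinuous with respect to the natural topology of the finite-dimensional complex vector space ℂ[X₀,X₁]_l: for every n ∈ ℕ, the set {P ∈ ℂ[X₀,X₁]_l ∖ {0} : d₁(P) ≥ n} is open in ℂ[X₀,X₁]_l ∖ {0}. -/

import Mathlib

/-!
Common definitions: the apolar action of `ℂ[X₀,X₁]` on itself
(`Q • P := Q(∂/∂X₀, ∂/∂X₁)(P)`), the apolar ideal `Ann(P)` and its homogeneous
components, the cokernel `C_P^d` of `Q ↦ Q • P : ℂ[X₀,X₁]_d → ℂ[X₀,X₁]_{l-d}`,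
the invariant `d₁(P)` and the Waring rank.
-/

open MvPolynomial

noncomputable section

/-- The partial derivative `∂/∂Xᵢ` as a `ℂ`-linear endomorphism of `ℂ[X₀,X₁]`. -/
def pd (i : Fin 2) : Module.End ℂ (MvPolynomial (Fin 2) ℂ) := (pderiv (R := ℂ) i).toLinearMap

lemma pd_comm : Commute (pd 0) (pd 1) := by
  apply LinearMap.ext
  intro P
  induction P using MvPolynomial.induction_on' with
  | monomial s a =>
      simp [pd, Module.End.mul_apply, pderiv_monomial]
      rw [tsub_right_comm, mul_right_comm]
  | add p q hp hq => simp_all [Module.End.mul_apply, map_add]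

/-- The endomorphism `∂₀^{m 0} ∘ ∂₁^{m 1}` of `ℂ[X₀,X₁]`, as a monoid homomorphism in the
exponent `m`. -/
def derivMonomialHom :
    Multiplicative (Fin 2 →₀ ℕ) →* Module.End ℂ (MvPolynomial (Fin 2) ℂ) where
  toFun m := pd 0 ^ (Multiplicative.toAdd m 0) * pd 1 ^ (Multiplicative.toAdd m 1)
  map_one' := by simp
  map_mul' a b := by
    simp only [toAdd_mul, Finsupp.add_apply, pow_add]
    exact (Commute.pow_pow pd_comm _ _).mul_mul_mul_comm _ _

/-- The representation of `ℂ[X₀,X₁]` by constant-coefficient differential operators: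
`diffOp Q = Q(∂/∂X₀, ∂/∂X₁)`.  It is the morphism of `ℂ`-algebras sending `X i` to
`∂/∂Xᵢ`. -/
def diffOp : MvPolynomial (Fin 2) ℂ →ₐ[ℂ] Module.End ℂ (MvPolynomial (Fin 2) ℂ) :=
  AddMonoidAlgebra.lift ℂ _ (Fin 2 →₀ ℕ) derivMonomialHom

/-- The apolar action `Q • P := Q(∂/∂X₀, ∂/∂X₁)(P)`. -/
def apolar (Q P : MvPolynomial (Fin 2) ℂ) : MvPolynomial (Fin 2) ℂ := diffOp Q P

/-- For fixed `P`, the map `Q ↦ Q • P` is `ℂ`-linear in `Q`. -/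
def apolarLM (P : MvPolynomial (Fin 2) ℂ) :
    MvPolynomial (Fin 2) ℂ →ₗ[ℂ] MvPolynomial (Fin 2) ℂ :=
  (LinearMap.applyₗ P).comp diffOp.toLinearMap

lemma apolarLM_apply (P Q : MvPolynomial (Fin 2) ℂ) : apolarLM P Q = apolar Q P := rfl

/-- The apolar ideal `Ann(P) = {Q | Q • P = 0}`. -/
def annIdeal (P : MvPolynomial (Fin 2) ℂ) : Ideal (MvPolynomial (Fin 2) ℂ) where
  carrier := {Q | apolar Q P = 0}
  zero_mem' := by simp [apolar]
  add_mem' := by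
    intro a b ha hb
    simp only [Set.mem_setOf_eq, apolar, map_add, LinearMap.add_apply] at *
    rw [ha, hb, add_zero]
  smul_mem' := by
    intro c Q hQ
    simp only [Set.mem_setOf_eq, smul_eq_mul, apolar, map_mul, Module.End.mul_apply] at *
    rw [hQ, map_zero]

/-- The degree-`d` homogeneous component `Ann(P)_d` of the apolar ideal of `P`. -/
def annComp (P : MvPolynomial (Fin 2) ℂ) (d : ℕ) :
    Submodule ℂ (MvPolynomial (Fin 2) ℂ) :=
  homogeneousSubmodule (Fin 2) ℂ d ⊓ LinearMap.ker (apolarLM P)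

/-- The image of `ℂ[X₀,X₁]_d` under `Q ↦ Q • P`, viewed as a subspace of `ℂ[X₀,X₁]_{l-d}`
(for `P` homogeneous of degree `l` and `d ≤ l` the image is indeed contained in
`ℂ[X₀,X₁]_{l-d}`). -/
def apolarImage (P : MvPolynomial (Fin 2) ℂ) (l d : ℕ) :
    Submodule ℂ (homogeneousSubmodule (Fin 2) ℂ (l - d)) :=
  Submodule.comap (homogeneousSubmodule (Fin 2) ℂ (l - d)).subtype
    (Submodule.map (apolarLM P) (homogeneousSubmodule (Fin 2) ℂ d))

/-- `C_P^d`: the cokernel of the `ℂ`-linear map `ℂ[X₀,X₁]_d → ℂ[X₀,X₁]_{l-d}`, `Q ↦ Q • P`. -/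
abbrev ApolarCoker (P : MvPolynomial (Fin 2) ℂ) (l d : ℕ) :=
  (homogeneousSubmodule (Fin 2) ℂ (l - d)) ⧸ apolarImage P l d

/-- `d₁(P)`: the minimal degree of a nonzero homogeneous polynomial in `Ann(P)`. -/
def d1 (P : MvPolynomial (Fin 2) ℂ) : ℕ :=
  sInf {d | ∃ Q : MvPolynomial (Fin 2) ℂ, Q ≠ 0 ∧ Q.IsHomogeneous d ∧ apolar Q P = 0}

/-- The Waring rank of a binary form `P` of degree `l`: the least `r` such that `P` is a sum
of `r` `l`-th powers of linear forms. -/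
def waringRank (l : ℕ) (P : MvPolynomial (Fin 2) ℂ) : ℕ :=
  sInf {r | ∃ lam : Fin r → MvPolynomial (Fin 2) ℂ,
    (∀ i, (lam i).IsHomogeneous 1) ∧ P = ∑ i, lam i ^ l}

end

/-- The natural topology on `ℂ[X₀,X₁]`: the topology of coefficientwise convergence.  On each
finite-dimensional subspace (such as the space of forms of a fixed degree) it coincides with
the natural topology of a finite-dimensional complex vector space. -/
noncomputable instance : TopologicalSpace (MvPolynomial (Fin 2) ℂ) :=
  TopologicalSpace.induced
    (fun P (m : Fin 2 →₀ ℕ) => MvPolynomial.coeff m P) Pi.topologicalSpace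

section AuxProof

open MvPolynomial Finsupp

noncomputable section

lemma degree_fin2 (m : Fin 2 →₀ ℕ) : m.degree = m 0 + m 1 := by
  rw [Finsupp.degree_apply, Finset.sum_subset (Finset.subset_univ m.support)]
  · exact Fin.sum_univ_two m
  · intro i _ hi
    simpa using Finsupp.notMem_support_iff.mp hi

lemma degree_sub_single {d : Fin 2 →₀ ℕ} {i : Fin 2} (h : d i ≠ 0) :
    (d - Finsupp.single i 1).degree = d.degree - 1 := by
  have hi : i = 0 ∨ i = 1 := by fin_cases i <;> simp
  rw [degree_fin2, degree_fin2, Finsupp.tsub_apply, Finsupp.tsub_apply]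
  rcases hi with rfl | rfl
  · rw [Finsupp.single_eq_same, Finsupp.single_eq_of_ne (by decide)]
    have h0 : d 0 ≠ 0 := h
    omega
  · rw [Finsupp.single_eq_same, Finsupp.single_eq_of_ne (by decide)]
    have h1 : d 1 ≠ 0 := h
    omega

lemma isHomogeneous_pderiv {P : MvPolynomial (Fin 2) ℂ} {m : ℕ} (h : P.IsHomogeneous m)
    (i : Fin 2) : (pderiv (R := ℂ) i P).IsHomogeneous (m - 1) := by
  rw [P.as_sum, map_sum]
  apply MvPolynomial.IsHomogeneous.sum
  intro d hd
  rw [pderiv_monomial]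
  by_cases h0 : d i = 0
  · simp only [h0, Nat.cast_zero, mul_zero, map_zero]
    exact (homogeneousSubmodule (Fin 2) ℂ (m - 1)).zero_mem
  · apply isHomogeneous_monomial
    rw [degree_sub_single h0]
    have hm := h (MvPolynomial.mem_support_iff.mp hd)
    rw [show (weight 1 : (Fin 2 →₀ ℕ) →+ ℕ) = degree from Finsupp.degree_eq_weight_one.symm] at hm
    rw [hm]

lemma isHomogeneous_pd_pow {P : MvPolynomial (Fin 2) ℂ} {m : ℕ} (h : P.IsHomogeneous m)
    (i : Fin 2) (k : ℕ) : ((pd i ^ k) P).IsHomogeneous (m - k) := by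
  induction k generalizing m P with
  | zero => simpa using h
  | succ k ih =>
    rw [pow_succ', Module.End.mul_apply]
    have := isHomogeneous_pderiv (ih h) i
    rwa [show m - k - 1 = m - (k + 1) by omega] at this

lemma isHomogeneous_zero_pderiv {P : MvPolynomial (Fin 2) ℂ} (h : P.IsHomogeneous 0)
    (i : Fin 2) : pderiv (R := ℂ) i P = 0 := by
  rw [P.as_sum, map_sum]
  apply Finset.sum_eq_zero
  intro d hd
  have hdeg := h (MvPolynomial.mem_support_iff.mp hd)
  rw [show (weight 1 : (Fin 2 →₀ ℕ) →+ ℕ) = degree from Finsupp.degree_eq_weight_one.symm] at hdeg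
  have hdi : d i = 0 := by
    have := Finsupp.le_degree i d
    omega
  rw [pderiv_monomial, hdi]
  simp

lemma pd_pow_eq_zero {P : MvPolynomial (Fin 2) ℂ} {m : ℕ} (h : P.IsHomogeneous m)
    (i : Fin 2) : (pd i ^ (m + 1)) P = 0 := by
  induction m generalizing P with
  | zero => simpa [pd] using isHomogeneous_zero_pderiv h i
  | succ m ih =>
    rw [pow_succ, Module.End.mul_apply]
    exact ih (by simpa [pd] using isHomogeneous_pderiv h i)

lemma diffOp_monomial (m : Fin 2 →₀ ℕ) (c : ℂ) :
    diffOp (monomial m c) = c • (pd 0 ^ (m 0) * pd 1 ^ (m 1)) := by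
  exact AddMonoidAlgebra.lift_single derivMonomialHom m c

lemma apolar_monomial (m : Fin 2 →₀ ℕ) (c : ℂ) (P : MvPolynomial (Fin 2) ℂ) :
    apolar (monomial m c) P = c • (pd 0 ^ (m 0)) ((pd 1 ^ (m 1)) P) := by
  rw [apolar, diffOp_monomial]
  simp [Module.End.mul_apply]

lemma apolar_isHomogeneous {Q P : MvPolynomial (Fin 2) ℂ} {d l : ℕ}
    (hQ : Q.IsHomogeneous d) (hP : P.IsHomogeneous l) :
    (apolar Q P).IsHomogeneous (l - d) := by
  rw [Q.as_sum]
  have hs : apolar (∑ m ∈ Q.support, monomial m (coeff m Q)) P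
      = ∑ m ∈ Q.support, apolar (monomial m (coeff m Q)) P := by
    have h1 : diffOp (∑ m ∈ Q.support, monomial m (coeff m Q))
        = ∑ m ∈ Q.support, diffOp (monomial m (coeff m Q)) := map_sum diffOp _ _
    unfold apolar
    rw [h1, LinearMap.sum_apply]
  rw [hs]
  apply MvPolynomial.IsHomogeneous.sum
  intro m hm
  rw [apolar_monomial]
  have hdeg : m 0 + m 1 = d := by
    have := hQ (MvPolynomial.mem_support_iff.mp hm)
    rw [show (weight 1 : (Fin 2 →₀ ℕ) →+ ℕ) = degree from Finsupp.degree_eq_weight_one.symm, degree_fin2] at this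
    omega
  have h1 : ((pd 1 ^ (m 1)) P).IsHomogeneous (l - m 1) := isHomogeneous_pd_pow hP 1 (m 1)
  have h0 : ((pd 0 ^ (m 0)) ((pd 1 ^ (m 1)) P)).IsHomogeneous (l - m 1 - m 0) :=
    isHomogeneous_pd_pow h1 0 (m 0)
  rw [show l - m 1 - m 0 = l - d by omega] at h0
  exact Submodule.smul_mem (MvPolynomial.homogeneousSubmodule (Fin 2) ℂ (l - d)) _ h0

lemma diffOp_X0 : diffOp (X 0 : MvPolynomial (Fin 2) ℂ) = pd 0 := by
  rw [X, diffOp_monomial]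
  simp [Finsupp.single_apply]

lemma apolar_X0_pow (k : ℕ) (P : MvPolynomial (Fin 2) ℂ) :
    apolar ((X 0 : MvPolynomial (Fin 2) ℂ) ^ k) P = (pd 0 ^ k) P := by
  rw [apolar, map_pow, diffOp_X0]

/-- `Ann(P)` contains a nonzero form of degree `l+1` for `P` homogeneous of degree `l`. -/
lemma annSet_nonempty {P : MvPolynomial (Fin 2) ℂ} {l : ℕ} (hP : P.IsHomogeneous l) :
    {d | ∃ Q : MvPolynomial (Fin 2) ℂ, Q ≠ 0 ∧ Q.IsHomogeneous d ∧ apolar Q P = 0}.Nonempty := by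
  refine ⟨l + 1, (X 0 : MvPolynomial (Fin 2) ℂ) ^ (l + 1), ?_, ?_, ?_⟩
  · exact pow_ne_zero _ (MvPolynomial.X_ne_zero 0)
  · simpa using (MvPolynomial.isHomogeneous_X ℂ (0 : Fin 2)).pow (l + 1)
  · rw [apolar_X0_pow]
    exact pd_pow_eq_zero hP 0

lemma le_d1_iff {P : MvPolynomial (Fin 2) ℂ} {l : ℕ} (hP : P.IsHomogeneous l) (n : ℕ) :
    n ≤ d1 P ↔ ∀ d < n, ∀ Q : MvPolynomial (Fin 2) ℂ,
      Q.IsHomogeneous d → apolar Q P = 0 → Q = 0 := by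
  constructor
  · intro h d hd Q hQh hQa
    by_contra hQ0
    have hdS : d ∈ {d | ∃ Q : MvPolynomial (Fin 2) ℂ,
        Q ≠ 0 ∧ Q.IsHomogeneous d ∧ apolar Q P = 0} := ⟨Q, hQ0, hQh, hQa⟩
    have := Nat.sInf_le hdS
    rw [d1] at h
    omega
  · intro h
    rw [d1]
    by_contra hlt
    push_neg at hlt
    have hmem := Nat.sInf_mem (annSet_nonempty hP)
    obtain ⟨Q, hQ0, hQh, hQa⟩ := hmem
    exact hQ0 (h _ hlt Q hQh hQa)

/-! ### Topological instances -/

lemma continuous_coeff (m : Fin 2 →₀ ℕ) :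
    Continuous fun P : MvPolynomial (Fin 2) ℂ => coeff m P :=
  (continuous_apply m).comp continuous_induced_dom

instance : ContinuousAdd (MvPolynomial (Fin 2) ℂ) := by
  constructor
  apply continuous_induced_rng.2
  apply continuous_pi
  intro m
  simp only [Function.comp_def, MvPolynomial.coeff_add]
  exact ((continuous_coeff m).comp continuous_fst).add
    ((continuous_coeff m).comp continuous_snd)

instance : ContinuousNeg (MvPolynomial (Fin 2) ℂ) := by
  constructor
  apply continuous_induced_rng.2
  apply continuous_pi
  intro m
  simp only [Function.comp_def, MvPolynomial.coeff_neg]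
  exact (continuous_coeff m).neg

instance : IsTopologicalAddGroup (MvPolynomial (Fin 2) ℂ) := {}

instance : ContinuousSMul ℂ (MvPolynomial (Fin 2) ℂ) := by
  constructor
  apply continuous_induced_rng.2
  apply continuous_pi
  intro m
  simp only [Function.comp_def, MvPolynomial.coeff_smul, smul_eq_mul]
  exact continuous_fst.mul ((continuous_coeff m).comp continuous_snd)

instance : T2Space (MvPolynomial (Fin 2) ℂ) := by
  have : Topology.IsEmbedding
      (fun (P : MvPolynomial (Fin 2) ℂ) (m : Fin 2 →₀ ℕ) => MvPolynomial.coeff m P) := by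
    constructor
    · exact ⟨rfl⟩
    · intro P Q h
      ext m
      exact congrFun h m
  exact this.t2Space

instance homogFinDim (d : ℕ) : FiniteDimensional ℂ (homogeneousSubmodule (Fin 2) ℂ d) := by
  have hle : homogeneousSubmodule (Fin 2) ℂ d ≤ restrictTotalDegree (Fin 2) ℂ d := by
    intro P hP
    rw [mem_restrictTotalDegree]
    exact (mem_homogeneousSubmodule d P).mp hP |>.totalDegree_le
  have : FiniteDimensional ℂ (restrictTotalDegree (Fin 2) ℂ d) := by
    infer_instance
  exact Submodule.finiteDimensional_of_le hle

/-- The catalecticant, as a linear map in `P`. -/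
def catal (l d : ℕ) :
    homogeneousSubmodule (Fin 2) ℂ l →ₗ[ℂ]
      (homogeneousSubmodule (Fin 2) ℂ d →ₗ[ℂ] homogeneousSubmodule (Fin 2) ℂ (l - d)) where
  toFun P :=
    { toFun := fun Q => ⟨apolar Q.1 P.1, apolar_isHomogeneous Q.2 P.2⟩
      map_add' := fun Q Q' => by
        ext
        simp [apolar, map_add]
      map_smul' := fun c Q => by
        ext
        simp [apolar, map_smul] }
  map_add' P P' := by
    ext Q
    simp [apolar, map_add]
  map_smul' c P := by
    ext Q
    simp [apolar, map_smul]

lemma isOpen_inj (l d : ℕ) :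
    IsOpen {P : homogeneousSubmodule (Fin 2) ℂ l | Function.Injective (catal l d P)} := by
  classical
  set E := homogeneousSubmodule (Fin 2) ℂ d
  set F := homogeneousSubmodule (Fin 2) ℂ (l - d)
  let b := Module.finBasis ℂ E
  let A := LinearMap.toMatrixAlgEquiv b
  have hset : {P : homogeneousSubmodule (Fin 2) ℂ l | Function.Injective (catal l d P)}
      = ⋃ g : F →ₗ[ℂ] E,
          {P : homogeneousSubmodule (Fin 2) ℂ l | (A (g ∘ₗ catal l d P)).det ≠ 0} := by
    ext P
    simp only [Set.mem_setOf_eq, Set.mem_iUnion]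
    constructor
    · intro hinj
      obtain ⟨g, hg⟩ := (catal l d P).exists_leftInverse_of_injective
        (LinearMap.ker_eq_bot.mpr hinj)
      refine ⟨g, ?_⟩
      rw [hg, show (LinearMap.id : E →ₗ[ℂ] E) = 1 from rfl, map_one, Matrix.det_one]
      exact one_ne_zero
    · rintro ⟨g, hg⟩
      have hU : IsUnit (A (g ∘ₗ catal l d P)) :=
        (Matrix.isUnit_iff_isUnit_det _).mpr (isUnit_iff_ne_zero.mpr hg)
      have hU2 : IsUnit (g ∘ₗ catal l d P) := by
        have := hU.map A.symm
        simpa using this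
      have hbij := (Module.End.isUnit_iff _).mp hU2
      have : Function.Injective (g ∘ (catal l d P)) := by
        rw [← LinearMap.coe_comp]
        exact hbij.injective
      exact Function.Injective.of_comp this
  rw [hset]
  apply isOpen_iUnion
  intro g
  have hcont : Continuous fun P : homogeneousSubmodule (Fin 2) ℂ l =>
      A (g ∘ₗ catal l d P) := by
    have : (fun P : homogeneousSubmodule (Fin 2) ℂ l => A (g ∘ₗ catal l d P))
        = (A.toLinearMap ∘ₗ (LinearMap.llcomp ℂ E F E g) ∘ₗ catal l d : _ →ₗ[ℂ] _) := rfl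
    rw [this]
    exact LinearMap.continuous_of_finiteDimensional _
  have : Continuous fun P : homogeneousSubmodule (Fin 2) ℂ l =>
      (A (g ∘ₗ catal l d P)).det := hcont.matrix_det
  exact (isOpen_compl_singleton (x := (0 : ℂ))).preimage this

end

end AuxProof

section MainProof

open MvPolynomial Finsupp

lemma inj_catal_iff {l d : ℕ} (P : homogeneousSubmodule (Fin 2) ℂ l) :
    Function.Injective (catal l d P) ↔
      ∀ Q : MvPolynomial (Fin 2) ℂ, Q.IsHomogeneous d → apolar Q P.1 = 0 → Q = 0 := by
  constructor
  · intro hinj Q hQ h0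
    have h1 : catal l d P ⟨Q, hQ⟩ = 0 := Subtype.ext h0
    have h2 := hinj (a₁ := ⟨Q, hQ⟩) (a₂ := 0) (by rw [h1, map_zero])
    exact congrArg Subtype.val h2
  · intro h
    rw [← LinearMap.ker_eq_bot, eq_bot_iff]
    rintro ⟨Q, hQ⟩ hker
    have h0 : apolar Q P.1 = 0 := congrArg Subtype.val (LinearMap.mem_ker.mp hker)
    exact (Submodule.mem_bot _).mpr (Subtype.ext (h Q hQ h0))

end MainProof

/-- `d₁` is lower semicontinuous on `ℂ[X₀,X₁]_l ∖ {0}`: each set `{d₁ ≥ n}` is open. -/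
theorem d1_lowerSemicontinuous (l n : ℕ) :
    IsOpen {P : {P : MvPolynomial (Fin 2) ℂ // P.IsHomogeneous l ∧ P ≠ 0} |
      n ≤ d1 P.1} := by
  classical
  let ι : {P : MvPolynomial (Fin 2) ℂ // P.IsHomogeneous l ∧ P ≠ 0} →
      MvPolynomial.homogeneousSubmodule (Fin 2) ℂ l := fun P => ⟨P.1, P.2.1⟩
  have hι : Continuous ι := Continuous.subtype_mk continuous_subtype_val _
  have hset : {P : {P : MvPolynomial (Fin 2) ℂ // P.IsHomogeneous l ∧ P ≠ 0} | n ≤ d1 P.1}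
      = ι ⁻¹' (⋂ d ∈ Finset.range n,
          {P : MvPolynomial.homogeneousSubmodule (Fin 2) ℂ l |
            Function.Injective (catal l d P)}) := by
    ext P
    simp only [Set.mem_setOf_eq, Set.mem_preimage, Set.mem_iInter, Finset.mem_range]
    rw [le_d1_iff P.2.1]
    constructor
    · intro h d hd
      rw [inj_catal_iff]
      intro Q hQ h0
      exact h d hd Q hQ h0
    · intro h d hd Q hQ h0
      exact (inj_catal_iff (ι P)).mp (h d hd) Q hQ h0
  rw [hset]
  exact (isOpen_biInter_finset (fun d _ => isOpen_inj l d)).preimage hι
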